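/- (Morley's trisector theorem) Let A, B, C be an affinely independent triple of points in the Euclidean plane ℝ², and write α = ∠BAC, β = ∠CBA, γ = ∠ACB for its (unsigned) interior angles. Let X, Y, Z be points in the interior of the convex hull of {A, B, C} such that ∠XBC = β/3 and ∠XCB = γ/3 (X is the meet of the trisectors adjacent to side BC), ∠YCA = γ/3 and ∠YAC = α/3 (Y is the meet of the trisectors adjacent to side CA), and ∠ZAB = α/3 and ∠ZBA = β/3 (Z is the meet of the trisectors adjacent to side AB). Then the triangle XYZ is equilateral, i.e. dist X Y = dist Y Z = dist Z X. -/

import Mathlib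

open EuclideanGeometry Real

set_option maxHeartbeats 2000000

noncomputable section MorleyAux

local notation "E2" => EuclideanSpace ℝ (Fin 2)

instance morleyFact : Fact (Module.finrank ℝ (EuclideanSpace ℝ (Fin 2)) = 2) :=
  ⟨finrank_euclideanSpace_fin⟩

instance morleyOriented : Module.Oriented ℝ (EuclideanSpace ℝ (Fin 2)) (Fin 2) :=
  ⟨Module.Basis.orientation (EuclideanSpace.basisFun (Fin 2) ℝ).toBasis⟩

private lemma tri1 (x : ℝ) :
    Real.sin (3*x) = 4 * Real.sin x * Real.sin (π/3 + x) * Real.sin (π/3 - x) := by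
  have h1 := Real.sin_sq_add_cos_sq x
  have h5 : Real.sqrt 3 ^ 2 = 3 := Real.sq_sqrt (by norm_num)
  rw [Real.sin_three_mul, Real.sin_add, Real.sin_sub, Real.sin_pi_div_three, Real.cos_pi_div_three]
  linear_combination (-(Real.sin x * Real.cos x ^ 2)) * h5 + (-(3*Real.sin x)) * h1

private lemma tri2 {U V W : ℝ} (h : U + V + W = π) :
    Real.sin U ^ 2 + Real.sin V ^ 2 - 2 * Real.sin U * Real.sin V * Real.cos W
      = Real.sin W ^ 2 := by
  have hW : W = π - (U + V) := by linarith
  subst hW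
  rw [Real.cos_pi_sub, Real.sin_pi_sub, Real.cos_add, Real.sin_add]
  linear_combination (- Real.sin U ^2) * Real.sin_sq_add_cos_sq V
    + (- Real.sin V ^2) * Real.sin_sq_add_cos_sq U

private lemma law_sin1 (p q r : E2) :
    Real.sin (∠ p q r) * (dist p q * dist r q) = Real.sin (∠ q r p) * (dist q r * dist p r) := by
  rw [dist_eq_norm_vsub (EuclideanSpace ℝ (Fin 2)) p q,
    dist_eq_norm_vsub (EuclideanSpace ℝ (Fin 2)) r q,
    dist_eq_norm_vsub (EuclideanSpace ℝ (Fin 2)) q r,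
    dist_eq_norm_vsub (EuclideanSpace ℝ (Fin 2)) p r, EuclideanGeometry.angle,
    EuclideanGeometry.angle, InnerProductGeometry.sin_angle_mul_norm_mul_norm,
    InnerProductGeometry.sin_angle_mul_norm_mul_norm]
  have h1 : p -ᵥ r = (p -ᵥ q) - (r -ᵥ q) := (vsub_sub_vsub_cancel_right p r q).symm
  have h2 : q -ᵥ r = -(r -ᵥ q) := (neg_vsub_eq_vsub_rev r q).symm
  rw [h1, h2]
  congr 1
  simp only [inner_neg_left, inner_neg_right, inner_sub_left, inner_sub_right, neg_neg,
    real_inner_comm (r -ᵥ q) (p -ᵥ q)]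
  ring

private lemma law_sin2 {p q : E2} (r : E2) (hpq : p ≠ q) :
    Real.sin (∠ p q r) * dist r q = Real.sin (∠ r p q) * dist r p := by
  have h1 := law_sin1 p q r
  have h2 := law_sin1 q r p
  have h3 : Real.sin (∠ p q r) * (dist p q * dist r q)
      = Real.sin (∠ r p q) * (dist p q * dist r p) := by
    rw [h1, h2, dist_comm r p, dist_comm q p]; ring
  have hd : (0:ℝ) < dist p q := dist_pos.2 hpq
  have h4 : dist p q * (Real.sin (∠ p q r) * dist r q)
      = dist p q * (Real.sin (∠ r p q) * dist r p) := by linear_combination h3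
  exact mul_left_cancel₀ (ne_of_gt hd) h4

private lemma range_triple (A B C : E2) : Set.range ![A, B, C] = {A, B, C} := by
  ext x
  constructor
  · rintro ⟨i, rfl⟩; fin_cases i <;> simp
  · rintro (rfl | rfl | rfl)
    exacts [⟨0, rfl⟩, ⟨1, rfl⟩, ⟨2, rfl⟩]

private lemma sSameSide_of_interior {A B C P : E2} (h : AffineIndependent ℝ ![A, B, C])
    (hP : P ∈ interior (convexHull ℝ ({A, B, C} : Set (EuclideanSpace ℝ (Fin 2))))) :
    (affineSpan ℝ ({B, C} : Set (EuclideanSpace ℝ (Fin 2)))).SSameSide P A := by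
  have hrange : Set.range ![A, B, C] = {A, B, C} := range_triple A B C
  have htop : affineSpan ℝ (Set.range ![A, B, C]) = ⊤ := by
    rw [h.affineSpan_eq_top_iff_card_eq_finrank_add_one]
    simp [finrank_euclideanSpace_fin]
  let b : AffineBasis (Fin 3) ℝ E2 := ⟨![A, B, C], h, htop⟩
  have hb : Set.range b = {A, B, C} := hrange
  have hcoord : ∀ i, 0 < b.coord i P := by
    have := b.interior_convexHull (E := E2)
    rw [hb] at this
    rw [this] at hP
    exact hP
  obtain ⟨ha, hbb, hc⟩ : 0 < b.coord 0 P ∧ 0 < b.coord 1 P ∧ 0 < b.coord 2 P :=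
    ⟨hcoord 0, hcoord 1, hcoord 2⟩
  set a0 := b.coord 0 P with ha0
  set a1 := b.coord 1 P with ha1
  set a2 := b.coord 2 P with ha2
  have hsum : a0 + a1 + a2 = 1 := by
    have := b.sum_coord_apply_eq_one P
    rwa [Fin.sum_univ_three] at this
  have hdec : a0 • A + a1 • B + a2 • C = P := by
    have := b.linear_combination_coord_eq_self P
    rw [Fin.sum_univ_three] at this
    exact this
  have hμ : (0:ℝ) < a1 + a2 := by linarith
  set Q : E2 := AffineMap.lineMap B C (a2 / (a1 + a2)) with hQdef
  have hQ : Q ∈ affineSpan ℝ ({B, C} : Set (EuclideanSpace ℝ (Fin 2))) :=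
    AffineMap.lineMap_mem_affineSpan_pair _ _ _
  have hPQ : P - Q = a0 • (A - Q) := by
    rw [← hdec, hQdef, AffineMap.lineMap_apply]
    simp only [vsub_eq_sub, vadd_eq_add]
    match_scalars
    · field_simp
    · field_simp
      linear_combination a1 * hsum
    · field_simp
      linear_combination hsum
  have hA : A ∉ affineSpan ℝ ({B, C} : Set (EuclideanSpace ℝ (Fin 2))) := by
    intro hmem
    exact (affineIndependent_iff_not_collinear_set.1 h)
      (collinear_insert_of_mem_affineSpan_pair hmem)
  have hPn : P ∉ affineSpan ℝ ({B, C} : Set (EuclideanSpace ℝ (Fin 2))) := by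
    intro hmem
    have hd : P -ᵥ Q ∈ (affineSpan ℝ ({B, C} : Set (EuclideanSpace ℝ (Fin 2)))).direction :=
      AffineSubspace.vsub_mem_direction hmem hQ
    rw [vsub_eq_sub, hPQ] at hd
    rw [Submodule.smul_mem_iff _ (ne_of_gt ha)] at hd
    have : A ∈ affineSpan ℝ ({B, C} : Set (EuclideanSpace ℝ (Fin 2))) := by
      have := AffineSubspace.vadd_mem_of_mem_direction hd hQ
      simpa [vadd_eq_add, sub_add_cancel] using this
    exact hA this
  rw [AffineSubspace.sSameSide_iff_exists_left hQ]
  refine ⟨hPn, hA, Q, hQ, ?_⟩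
  rw [vsub_eq_sub, vsub_eq_sub, hPQ]
  exact SameRay.sameRay_nonneg_smul_left _ (le_of_lt ha)

private lemma set_rot (A B C : E2) : ({B, C, A} : Set E2) = {A, B, C} := by
  ext x; simp only [Set.mem_insert_iff, Set.mem_singleton_iff]; tauto

private lemma set_swap (A B C : E2) : ({A, C, B} : Set E2) = {A, B, C} := by
  ext x; simp only [Set.mem_insert_iff, Set.mem_singleton_iff]; tauto

private lemma affi_rot {A B C : E2} (h : AffineIndependent ℝ ![A, B, C]) :
    AffineIndependent ℝ ![B, C, A] := by
  rw [affineIndependent_iff_not_collinear_set] at h ⊢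
  rwa [set_rot]

private lemma affi_swap {A B C : E2} (h : AffineIndependent ℝ ![A, B, C]) :
    AffineIndependent ℝ ![A, C, B] := by
  rw [affineIndependent_iff_not_collinear_set] at h ⊢
  rwa [set_swap]

private lemma morley_key (A B C X Y Z : E2)
    (hABC : AffineIndependent ℝ ![A, B, C])
    (hsign : (∡ A B C).sign = 1)
    (hX : X ∈ interior (convexHull ℝ {A, B, C}))
    (hY : Y ∈ interior (convexHull ℝ {A, B, C}))
    (hZ : Z ∈ interior (convexHull ℝ {A, B, C}))
    (hXB : ∠ X B C = ∠ C B A / 3) (hXC : ∠ X C B = ∠ A C B / 3)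
    (hYC : ∠ Y C A = ∠ A C B / 3) (hYA : ∠ Y A C = ∠ B A C / 3)
    (hZA : ∠ Z A B = ∠ B A C / 3) (hZB : ∠ Z B A = ∠ C B A / 3) :
    dist X Y = dist Y Z ∧ dist Y Z = dist Z X := by
  -- distinctness of vertices
  have hAB : A ≠ B := by
    intro h
    have : (0 : Fin 3) = 1 := hABC.injective (show ![A,B,C] 0 = ![A,B,C] 1 by simp [h])
    simp at this
  have hAC : A ≠ C := by
    intro h
    have : (0 : Fin 3) = 2 := hABC.injective (show ![A,B,C] 0 = ![A,B,C] 2 by simp [h])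
    simp at this
  have hBC : B ≠ C := by
    intro h
    have : (1 : Fin 3) = 2 := hABC.injective (show ![A,B,C] 1 = ![A,B,C] 2 by simp [h])
    simp at this
  -- same-side facts
  have sX : (affineSpan ℝ ({B, C} : Set E2)).SSameSide X A := sSameSide_of_interior hABC hX
  have sY : (affineSpan ℝ ({C, A} : Set E2)).SSameSide Y B := by
    refine sSameSide_of_interior (affi_rot hABC) ?_
    rwa [set_rot]
  have sZ : (affineSpan ℝ ({A, B} : Set E2)).SSameSide Z C := by
    refine sSameSide_of_interior (affi_rot (affi_rot hABC)) ?_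
    rwa [set_rot, set_rot]
  -- distinctness of trisector points from vertices
  have hXB' : X ≠ B := fun h =>
    sX.left_notMem (h ▸ left_mem_affineSpan_pair ℝ B C)
  have hXC' : X ≠ C := fun h =>
    sX.left_notMem (h ▸ right_mem_affineSpan_pair ℝ B C)
  have hYC' : Y ≠ C := fun h =>
    sY.left_notMem (h ▸ left_mem_affineSpan_pair ℝ C A)
  have hYA' : Y ≠ A := fun h =>
    sY.left_notMem (h ▸ right_mem_affineSpan_pair ℝ C A)
  have hZA' : Z ≠ A := fun h =>
    sZ.left_notMem (h ▸ left_mem_affineSpan_pair ℝ A B)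
  have hZB' : Z ≠ B := fun h =>
    sZ.left_notMem (h ▸ right_mem_affineSpan_pair ℝ A B)
  -- rotated signs
  have hsC : (∡ B C A).sign = 1 := by rw [oangle_rotate_sign]; exact hsign
  have hsA : (∡ C A B).sign = 1 := by rw [oangle_rotate_sign]; exact hsC
  -- signs of angles at trisector points
  have sgnX : (∡ B X C).sign = -1 := by
    have h1 : (∡ B X C).sign = (∡ B A C).sign :=
      (AffineSubspace.sSameSide_comm.mp sX).oangle_sign_eq
        (left_mem_affineSpan_pair ℝ B C) (right_mem_affineSpan_pair ℝ B C)
    rw [h1, ← oangle_swap₁₃_sign, hsA]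
  have sgnXBC : (∡ X B C).sign = 1 := by
    rw [oangle_rotate_sign C X B, ← oangle_swap₁₃_sign, sgnX]; norm_num
  have sgnBCX : (∡ B C X).sign = 1 := by rw [oangle_rotate_sign X B C]; exact sgnXBC
  have sgnY : (∡ C Y A).sign = -1 := by
    have h1 : (∡ C Y A).sign = (∡ C B A).sign :=
      (AffineSubspace.sSameSide_comm.mp sY).oangle_sign_eq
        (left_mem_affineSpan_pair ℝ C A) (right_mem_affineSpan_pair ℝ C A)
    rw [h1, ← oangle_swap₁₃_sign, hsign]
  have sgnYCA : (∡ Y C A).sign = 1 := by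
    rw [oangle_rotate_sign A Y C, ← oangle_swap₁₃_sign, sgnY]; norm_num
  have sgnCAY : (∡ C A Y).sign = 1 := by rw [oangle_rotate_sign Y C A]; exact sgnYCA
  have sgnZ : (∡ A Z B).sign = -1 := by
    have h1 : (∡ A Z B).sign = (∡ A C B).sign :=
      (AffineSubspace.sSameSide_comm.mp sZ).oangle_sign_eq
        (left_mem_affineSpan_pair ℝ A B) (right_mem_affineSpan_pair ℝ A B)
    rw [h1, ← oangle_swap₁₃_sign, hsC]
  have sgnZAB : (∡ Z A B).sign = 1 := by
    rw [oangle_rotate_sign B Z A, ← oangle_swap₁₃_sign, sgnZ]; norm_num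
  have sgnABZ : (∡ A B Z).sign = 1 := by rw [oangle_rotate_sign Z A B]; exact sgnZAB
  -- oriented angle values
  have oA : ∡ C A B = ((∠ B A C : ℝ) : Real.Angle) := by
    rw [oangle_eq_angle_of_sign_eq_one hsA, angle_comm]
  have oB : ∡ A B C = ((∠ C B A : ℝ) : Real.Angle) := by
    rw [oangle_eq_angle_of_sign_eq_one hsign, angle_comm]
  have oC : ∡ B C A = ((∠ A C B : ℝ) : Real.Angle) := by
    rw [oangle_eq_angle_of_sign_eq_one hsC, angle_comm]
  have oXBC : ∡ X B C = ((∠ C B A / 3 : ℝ) : Real.Angle) := by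
    rw [oangle_eq_angle_of_sign_eq_one sgnXBC, hXB]
  have oBCX : ∡ B C X = ((∠ A C B / 3 : ℝ) : Real.Angle) := by
    rw [oangle_eq_angle_of_sign_eq_one sgnBCX, angle_comm, hXC]
  have oYCA : ∡ Y C A = ((∠ A C B / 3 : ℝ) : Real.Angle) := by
    rw [oangle_eq_angle_of_sign_eq_one sgnYCA, hYC]
  have oCAY : ∡ C A Y = ((∠ B A C / 3 : ℝ) : Real.Angle) := by
    rw [oangle_eq_angle_of_sign_eq_one sgnCAY, angle_comm, hYA]
  have oZAB : ∡ Z A B = ((∠ B A C / 3 : ℝ) : Real.Angle) := by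
    rw [oangle_eq_angle_of_sign_eq_one sgnZAB, hZA]
  have oABZ : ∡ A B Z = ((∠ C B A / 3 : ℝ) : Real.Angle) := by
    rw [oangle_eq_angle_of_sign_eq_one sgnABZ, angle_comm, hZB]
  set α := ∠ B A C with hαdef
  set β := ∠ C B A with hβdef
  set γ := ∠ A C B with hγdef
  -- angle sum and bounds
  have hsum3 : α + β + γ = π := by
    have h := angle_add_angle_add_angle_eq_pi B hAC
    rw [angle_comm C A B, angle_comm A B C, angle_comm B C A] at h
    linarith
  have hα0 : 0 < α := by
    rcases eq_or_lt_of_le (angle_nonneg B A C) with h | h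
    · exfalso
      have h0 : ∡ C A B = 0 :=
        (oangle_eq_zero_iff_angle_eq_zero hAC.symm hAB.symm).2 (by rw [angle_comm]; exact h.symm)
      rw [h0] at hsA; simp at hsA
    · exact h
  have hβ0 : 0 < β := by
    rcases eq_or_lt_of_le (angle_nonneg C B A) with h | h
    · exfalso
      have h0 : ∡ A B C = 0 :=
        (oangle_eq_zero_iff_angle_eq_zero hAB hBC.symm).2 (by rw [angle_comm]; exact h.symm)
      rw [h0] at hsign; simp at hsign
    · exact h
  have hγ0 : 0 < γ := by
    rcases eq_or_lt_of_le (angle_nonneg A C B) with h | h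
    · exfalso
      have h0 : ∡ B C A = 0 :=
        (oangle_eq_zero_iff_angle_eq_zero hBC hAC).2 (by rw [angle_comm]; exact h.symm)
      rw [h0] at hsC; simp at hsC
    · exact h
  have hαπ : α < π := by linarith
  have hβπ : β < π := by linarith
  have hγπ : γ < π := by linarith
  -- third angles of the small triangles
  have hCXB : ∠ C X B = π - (β/3 + γ/3) := by
    have h := angle_add_angle_add_angle_eq_pi B hXC'
    rw [hXB, angle_comm B C X, hXC] at h
    linarith
  have hAYC : ∠ A Y C = π - (α/3 + γ/3) := by
    have h := angle_add_angle_add_angle_eq_pi C hYA'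
    rw [hYC, angle_comm C A Y, hYA] at h
    linarith
  have hBZA : ∠ B Z A = π - (α/3 + β/3) := by
    have h := angle_add_angle_add_angle_eq_pi A hZB'
    rw [hZA, angle_comm A B Z, hZB] at h
    linarith
  -- the middle trisected angles at the vertices
  have aZBX : ∠ Z B X = β/3 := by
    have e1 : ∡ A B Z + ∡ Z B X = ∡ A B X := oangle_add hAB hZB' hXB'
    have e2 : ∡ A B X + ∡ X B C = ∡ A B C := oangle_add hAB hXB' hBC.symm
    have e3 : ∡ Z B X = ((β/3 : ℝ) : Real.Angle) := by
      have h : ∡ Z B X = ∡ A B C - ∡ A B Z - ∡ X B C := by rw [← e2, ← e1]; abel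
      rw [oB, oABZ, oXBC] at h
      rw [h, ← Real.Angle.coe_sub, ← Real.Angle.coe_sub]
      congr 1; ring
    rw [angle_eq_abs_oangle_toReal hZB' hXB', e3,
      Real.Angle.abs_toReal_coe_eq_self_iff.2 ⟨by linarith, by linarith [pi_pos]⟩]
  have aXCY : ∠ X C Y = γ/3 := by
    have e1 : ∡ B C X + ∡ X C Y = ∡ B C Y := oangle_add hBC hXC' hYC'
    have e2 : ∡ B C Y + ∡ Y C A = ∡ B C A := oangle_add hBC hYC' hAC
    have e3 : ∡ X C Y = ((γ/3 : ℝ) : Real.Angle) := by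
      have h : ∡ X C Y = ∡ B C A - ∡ Y C A - ∡ B C X := by rw [← e2, ← e1]; abel
      rw [oC, oYCA, oBCX] at h
      rw [h, ← Real.Angle.coe_sub, ← Real.Angle.coe_sub]
      congr 1; ring
    rw [angle_eq_abs_oangle_toReal hXC' hYC', e3,
      Real.Angle.abs_toReal_coe_eq_self_iff.2 ⟨by linarith, by linarith [pi_pos]⟩]
  have aYAZ : ∠ Y A Z = α/3 := by
    have e1 : ∡ C A Y + ∡ Y A Z = ∡ C A Z := oangle_add hAC.symm hYA' hZA'
    have e2 : ∡ C A Z + ∡ Z A B = ∡ C A B := oangle_add hAC.symm hZA' hAB.symm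
    have e3 : ∡ Y A Z = ((α/3 : ℝ) : Real.Angle) := by
      have h : ∡ Y A Z = ∡ C A B - ∡ Z A B - ∡ C A Y := by rw [← e2, ← e1]; abel
      rw [oA, oZAB, oCAY] at h
      rw [h, ← Real.Angle.coe_sub, ← Real.Angle.coe_sub]
      congr 1; ring
    rw [angle_eq_abs_oangle_toReal hYA' hZA', e3,
      Real.Angle.abs_toReal_coe_eq_self_iff.2 ⟨by linarith, by linarith [pi_pos]⟩]
  -- sine positivity
  have hsα : 0 < Real.sin α := Real.sin_pos_of_pos_of_lt_pi hα0 hαπ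
  have hsu : 0 < Real.sin (α/3) := Real.sin_pos_of_pos_of_lt_pi (by linarith) (by linarith [pi_pos])
  have hsv : 0 < Real.sin (β/3) := Real.sin_pos_of_pos_of_lt_pi (by linarith) (by linarith [pi_pos])
  have hsw : 0 < Real.sin (γ/3) := Real.sin_pos_of_pos_of_lt_pi (by linarith) (by linarith [pi_pos])
  have htu : 0 < Real.sin (π/3 - α/3) := Real.sin_pos_of_pos_of_lt_pi (by linarith) (by linarith [pi_pos])
  have htv : 0 < Real.sin (π/3 - β/3) := Real.sin_pos_of_pos_of_lt_pi (by linarith) (by linarith [pi_pos])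
  have htw : 0 < Real.sin (π/3 - γ/3) := Real.sin_pos_of_pos_of_lt_pi (by linarith) (by linarith [pi_pos])
  -- law of sines in the small triangles
  have hsvw : β/3 + γ/3 = π/3 - α/3 := by linarith
  have hsuw : α/3 + γ/3 = π/3 - β/3 := by linarith
  have hsuv : α/3 + β/3 = π/3 - γ/3 := by linarith
  have ew1 : dist B X * Real.sin (π/3 - α/3) = dist B C * Real.sin (γ/3) := by
    have h := law_sin2 (p := C) (q := X) B hXC'.symm
    rw [hCXB, angle_comm B C X, hXC, Real.sin_pi_sub, hsvw] at h
    linear_combination h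
  have ew2 : dist C X * Real.sin (π/3 - α/3) = dist B C * Real.sin (β/3) := by
    have h := law_sin2 (p := B) (q := X) C hXB'.symm
    rw [angle_comm B X C, hCXB, angle_comm C B X, hXB, Real.sin_pi_sub, hsvw, dist_comm C B] at h
    linear_combination h
  have ew3 : dist C Y * Real.sin (π/3 - β/3) = dist C A * Real.sin (α/3) := by
    have h := law_sin2 (p := A) (q := Y) C hYA'.symm
    rw [hAYC, angle_comm C A Y, hYA, Real.sin_pi_sub, hsuw] at h
    linear_combination h
  have ew4 : dist A Y * Real.sin (π/3 - β/3) = dist C A * Real.sin (γ/3) := by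
    have h := law_sin2 (p := C) (q := Y) A hYC'.symm
    rw [angle_comm C Y A, hAYC, angle_comm A C Y, hYC, Real.sin_pi_sub, hsuw, dist_comm A C] at h
    linear_combination h
  have ew5 : dist A Z * Real.sin (π/3 - γ/3) = dist A B * Real.sin (β/3) := by
    have h := law_sin2 (p := B) (q := Z) A hZB'.symm
    rw [hBZA, angle_comm A B Z, hZB, Real.sin_pi_sub, hsuv] at h
    linear_combination h
  have ew6 : dist B Z * Real.sin (π/3 - γ/3) = dist A B * Real.sin (α/3) := by
    have h := law_sin2 (p := A) (q := Z) B hZA'.symm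
    rw [angle_comm A Z B, hBZA, angle_comm B A Z, hZA, Real.sin_pi_sub, hsuv, dist_comm B A] at h
    linear_combination h
  -- law of sines in the big triangle
  have hbs1 : dist B C * Real.sin γ = dist A B * Real.sin α := by
    have h := law_sin2 (p := A) (q := C) B hAC
    rw [dist_comm B A] at h
    linear_combination h
  have hbs2 : dist B C * Real.sin β = dist C A * Real.sin α := by
    have h := law_sin2 (p := A) (q := B) C hAB
    rw [angle_comm A B C, angle_comm C A B, dist_comm C B] at h
    linear_combination h
  -- normalized side lengths
  set K := dist B C / Real.sin α with hK
  have ha_eq : dist B C = K * Real.sin α := by rw [hK]; field_simp [ne_of_gt hsα]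
  have hc_eq : dist A B = K * Real.sin γ := by
    rw [hK, div_mul_eq_mul_div, eq_div_iff (ne_of_gt hsα)]
    linear_combination - hbs1
  have hb_eq : dist C A = K * Real.sin β := by
    rw [hK, div_mul_eq_mul_div, eq_div_iff (ne_of_gt hsα)]
    linear_combination - hbs2
  -- triple angle expansions
  have hα3 : Real.sin α = 4 * Real.sin (α/3) * Real.sin (π/3 + α/3) * Real.sin (π/3 - α/3) := by
    have h := tri1 (α/3); rwa [show 3*(α/3) = α by ring] at h
  have hβ3 : Real.sin β = 4 * Real.sin (β/3) * Real.sin (π/3 + β/3) * Real.sin (π/3 - β/3) := by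
    have h := tri1 (β/3); rwa [show 3*(β/3) = β by ring] at h
  have hγ3 : Real.sin γ = 4 * Real.sin (γ/3) * Real.sin (π/3 + γ/3) * Real.sin (π/3 - γ/3) := by
    have h := tri1 (γ/3); rwa [show 3*(γ/3) = γ by ring] at h
  -- closed forms for the six distances
  have fBX : dist B X = 4*K*Real.sin (α/3)*Real.sin (π/3 + α/3)*Real.sin (γ/3) := by
    apply mul_right_cancel₀ (ne_of_gt htu)
    rw [ew1, ha_eq, hα3]; ring
  have fCX : dist C X = 4*K*Real.sin (α/3)*Real.sin (π/3 + α/3)*Real.sin (β/3) := by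
    apply mul_right_cancel₀ (ne_of_gt htu)
    rw [ew2, ha_eq, hα3]; ring
  have fCY : dist C Y = 4*K*Real.sin (β/3)*Real.sin (π/3 + β/3)*Real.sin (α/3) := by
    apply mul_right_cancel₀ (ne_of_gt htv)
    rw [ew3, hb_eq, hβ3]; ring
  have fAY : dist A Y = 4*K*Real.sin (β/3)*Real.sin (π/3 + β/3)*Real.sin (γ/3) := by
    apply mul_right_cancel₀ (ne_of_gt htv)
    rw [ew4, hb_eq, hβ3]; ring
  have fAZ : dist A Z = 4*K*Real.sin (γ/3)*Real.sin (π/3 + γ/3)*Real.sin (β/3) := by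
    apply mul_right_cancel₀ (ne_of_gt htw)
    rw [ew5, hc_eq, hγ3]; ring
  have fBZ : dist B Z = 4*K*Real.sin (γ/3)*Real.sin (π/3 + γ/3)*Real.sin (α/3) := by
    apply mul_right_cancel₀ (ne_of_gt htw)
    rw [ew6, hc_eq, hγ3]; ring
  -- the three squared side lengths of the Morley triangle
  have q1 : dist Z X ^ 2 = (4*K*Real.sin (α/3)*Real.sin (β/3)*Real.sin (γ/3))^2 := by
    rw [pow_two, law_cos Z B X, dist_comm Z B, dist_comm X B, fBZ, fBX, aZBX]
    have hid := tri2 (U := π/3 + γ/3) (V := π/3 + α/3) (W := β/3) (by linarith)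
    linear_combination (4*K*Real.sin (α/3)*Real.sin (γ/3))^2 * hid
  have q2 : dist X Y ^ 2 = (4*K*Real.sin (α/3)*Real.sin (β/3)*Real.sin (γ/3))^2 := by
    rw [pow_two, law_cos X C Y, dist_comm X C, dist_comm Y C, fCX, fCY, aXCY]
    have hid := tri2 (U := π/3 + α/3) (V := π/3 + β/3) (W := γ/3) (by linarith)
    linear_combination (4*K*Real.sin (α/3)*Real.sin (β/3))^2 * hid
  have q3 : dist Y Z ^ 2 = (4*K*Real.sin (α/3)*Real.sin (β/3)*Real.sin (γ/3))^2 := by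
    rw [pow_two, law_cos Y A Z, dist_comm Y A, dist_comm Z A, fAY, fAZ, aYAZ]
    have hid := tri2 (U := π/3 + β/3) (V := π/3 + γ/3) (W := α/3) (by linarith)
    linear_combination (4*K*Real.sin (β/3)*Real.sin (γ/3))^2 * hid
  constructor
  · rw [← Real.sqrt_sq (dist_nonneg (x := X) (y := Y)),
      ← Real.sqrt_sq (dist_nonneg (x := Y) (y := Z)), q2, q3]
  · rw [← Real.sqrt_sq (dist_nonneg (x := Y) (y := Z)),
      ← Real.sqrt_sq (dist_nonneg (x := Z) (y := X)), q3, q1]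


end MorleyAux

theorem morley_trisector
    (A B C X Y Z : EuclideanSpace ℝ (Fin 2))
    (hABC : AffineIndependent ℝ ![A, B, C])
    (hX : X ∈ interior (convexHull ℝ {A, B, C}))
    (hY : Y ∈ interior (convexHull ℝ {A, B, C}))
    (hZ : Z ∈ interior (convexHull ℝ {A, B, C}))
    (hXB : ∠ X B C = ∠ C B A / 3) (hXC : ∠ X C B = ∠ A C B / 3)
    (hYC : ∠ Y C A = ∠ A C B / 3) (hYA : ∠ Y A C = ∠ B A C / 3)
    (hZA : ∠ Z A B = ∠ B A C / 3) (hZB : ∠ Z B A = ∠ C B A / 3) :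
    dist X Y = dist Y Z ∧ dist Y Z = dist Z X := by
  have hind := (oangle_ne_zero_and_ne_pi_iff_affineIndependent (p₁ := A) (p₂ := B) (p₃ := C)).2 hABC
  have hne : (∡ A B C).sign ≠ 0 := by
    intro h0
    rcases Real.Angle.sign_eq_zero_iff.1 h0 with h | h
    exacts [hind.1 h, hind.2 h]
  cases hs : (∡ A B C).sign with
  | zero => exact absurd hs hne
  | pos =>
    have hs1 : (∡ A B C).sign = 1 := hs
    exact morley_key A B C X Y Z hABC hs1 hX hY hZ hXB hXC hYC hYA hZA hZB
  | neg =>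
    have hs1 : (∡ A C B).sign = 1 := by
      rw [← oangle_swap₂₃_sign A B C, hs]; rfl
    have hABC' := affi_swap hABC
    have hset := set_swap A B C
    obtain ⟨g1, g2⟩ := morley_key A C B X Z Y hABC' hs1 (by rwa [hset]) (by rwa [hset])
      (by rwa [hset])
      (by rw [angle_comm B C A]; exact hXC)
      (by rw [angle_comm A B C]; exact hXB)
      (by rw [angle_comm A B C]; exact hZB)
      (by rw [angle_comm C A B]; exact hZA)
      (by rw [angle_comm C A B]; exact hYA)
      (by rw [angle_comm B C A]; exact hYC)
    constructor
    · calc dist X Y = dist Y X := dist_comm _ _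
        _ = dist Z Y := g2.symm
        _ = dist Y Z := dist_comm _ _
    · calc dist Y Z = dist Z Y := dist_comm _ _
        _ = dist X Z := g1.symm
        _ = dist Z X := dist_comm _ _
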